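/- There exists an arithmetic sequence (a_n) that is density lifting invariant (dli) but not b-bounded. -/

import Mathlib

open Filter Topology Set

noncomputable section

/-- The sequence of ratios `b n = a n / a (n-1)` of an arithmetic sequence. -/
def ratios (a : ℕ → ℕ) (n : ℕ) : ℕ := a n / a (n - 1)

/-- An arithmetic sequence: `a 0 = 1`, strictly increasing, each term divides the next. -/
def IsArithSeq (a : ℕ → ℕ) : Prop :=
  a 0 = 1 ∧ (∀ n, a n < a (n + 1)) ∧ (∀ n, a n ∣ a (n + 1))

/-- The indices `n_k` with `a k = d (n k)`: `n 0 = 1`, `n (k+1) = n k + (b (k+1) - 1)`. -/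
def nseq (a : ℕ → ℕ) : ℕ → ℕ
  | 0 => 1
  | k + 1 => nseq a k + (ratios a (k + 1) - 1)

/-- The lifting function `L(A) = ⋃_{k ∈ A} [n_{k-1}, n_k - 1]`. -/
def liftSet (a : ℕ → ℕ) (A : Set ℕ) : Set ℕ :=
  ⋃ k ∈ A, Set.Icc (nseq a (k - 1)) (nseq a k - 1)

/-- `A ⊆ ℕ` has natural density `δ`. -/
def HasDensity (A : Set ℕ) (δ : ℝ) : Prop :=
  Tendsto (fun n : ℕ => ((A ∩ Set.Iio n).ncard : ℝ) / n) atTop (𝓝 δ)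

/-- The upper natural density of `A ⊆ ℕ`. -/
def upperDensity (A : Set ℕ) : ℝ :=
  limsup (fun n : ℕ => ((A ∩ Set.Iio n).ncard : ℝ) / n) atTop

/-- The sequence `(d n)`: the increasing enumeration of `{r * a k : k ≥ 0, 1 ≤ r < b (k+1)}`. -/
def dSeq (a : ℕ → ℕ) : ℕ → ℕ :=
  Nat.nth (fun m => ∃ k r : ℕ, 1 ≤ r ∧ r < ratios a (k + 1) ∧ m = r * a k)

/-- The characterized subgroup `t_{(u n)}(𝕋)`. -/
def charSub (u : ℕ → ℤ) : Set (AddCircle (1 : ℝ)) :=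
  {x | Tendsto (fun n => u n • x) atTop (𝓝 0)}

/-- The statistically characterized subgroup `t^s_{(u n)}(𝕋)`. -/
def statChar (u : ℕ → ℤ) : Set (AddCircle (1 : ℝ)) :=
  {x | ∀ ε : ℝ, 0 < ε → HasDensity {n : ℕ | ε ≤ ‖u n • x‖} 0}

/-- Density lifting invariant. -/
def Dli (a : ℕ → ℕ) : Prop :=
  ∀ A : Set ℕ, A.Infinite → HasDensity A 0 → HasDensity (liftSet a A) 0

/-- Weakly density lifting invariant. -/
def WeaklyDli (a : ℕ → ℕ) : Prop :=
  ∃ A : Set ℕ, A.Infinite ∧ ∀ m : ℕ, HasDensity (liftSet a ((fun x => x - m) '' A)) 0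

/-- Strongly non density lifting invariant. -/
def StronglyNonDli (a : ℕ → ℕ) : Prop :=
  ∀ A : Set ℕ, A.Infinite → 0 < upperDensity (liftSet a A)


namespace DliAux

/-- Our example: `a n = n! · 2^n`, whose ratio sequence is `2n`. -/
def mya (n : ℕ) : ℕ := n.factorial * 2^n

lemma mya_pos (n : ℕ) : 0 < mya n :=
  Nat.mul_pos n.factorial_pos (Nat.pow_pos (by norm_num))

lemma mya_succ (n : ℕ) : mya (n+1) = 2*(n+1) * mya n := by
  simp [mya, Nat.factorial_succ, pow_succ]; ring

lemma ratios_mya (n : ℕ) : ratios mya (n+1) = 2*(n+1) := by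
  simp only [ratios, Nat.add_sub_cancel, mya_succ]
  exact Nat.mul_div_cancel _ (mya_pos n)

lemma nseq_mya (k : ℕ) : nseq mya k = k^2 + 1 := by
  induction k with
  | zero => rfl
  | succ k ih => simp [nseq, ih, ratios_mya]; ring_nf; omega

lemma count_bound (A : Set ℕ) (n : ℕ) :
    (liftSet mya A ∩ Set.Iio n).ncard ≤
      2 * (Nat.sqrt n + 1) * (A ∩ Set.Iio (Nat.sqrt n + 2)).ncard := by
  classical
  set K := Nat.sqrt n + 1 with hK
  set T : Finset ℕ := (Finset.Iio (K+1)).filter (· ∈ A) with hT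
  have hsub : liftSet mya A ∩ Set.Iio n ⊆
      ↑(T.biUnion fun k => Finset.Icc ((k-1)^2+1) (k^2)) := by
    rintro m ⟨hm, hmn⟩
    simp only [liftSet, Set.mem_iUnion, Set.mem_Icc] at hm
    obtain ⟨k, hkA, h1, h2⟩ := hm
    rw [nseq_mya] at h1
    rw [nseq_mya] at h2
    replace h2 : m ≤ k^2 := by omega
    have hk1 : 1 ≤ k := by
      by_contra h
      interval_cases k <;> omega
    have hkK : k < K + 1 := by
      have hlt : (k-1)*(k-1) < n := by
        have : (k-1)^2 < m + 1 := by nlinarith [h1]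
        nlinarith [Set.mem_Iio.mp hmn]
      have := (Nat.le_sqrt.mpr (le_of_lt hlt))
      omega
    simp only [Finset.coe_biUnion, Set.mem_iUnion, Finset.mem_coe,
      Finset.mem_biUnion]
    exact ⟨k, by simp [hT, hkK, hkA], Finset.mem_Icc.mpr ⟨h1, h2⟩⟩
  have h1 : (liftSet mya A ∩ Set.Iio n).ncard ≤
      (T.biUnion fun k => Finset.Icc ((k-1)^2+1) (k^2)).card := by
    rw [← Set.ncard_coe_finset]
    exact Set.ncard_le_ncard hsub (Finset.finite_toSet _)
  have h2 : (T.biUnion fun k => Finset.Icc ((k-1)^2+1) (k^2)).card ≤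
      T.card * (2 * K) := by
    refine le_trans (Finset.card_biUnion_le) ?_
    refine le_trans (Finset.sum_le_card_nsmul T _ (2*K) ?_) (by simp [mul_comm])
    intro k hk
    have hkK : k < K + 1 := by
      have := Finset.mem_filter.mp hk
      exact Finset.mem_Iio.mp this.1
    rcases k with _ | j
    · simp
    · rw [Nat.card_Icc]
      simp only [Nat.add_sub_cancel]
      ring_nf
      omega
  have h3 : T.card = (A ∩ Set.Iio (K+1)).ncard := by
    rw [show A ∩ Set.Iio (K+1) = ↑T by ext x; simp [hT, and_comm],
      Set.ncard_coe_finset]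
  calc (liftSet mya A ∩ Set.Iio n).ncard ≤ T.card * (2*K) := le_trans h1 h2
    _ = 2 * K * (A ∩ Set.Iio (K+1)).ncard := by rw [h3]; ring
    _ = 2 * (Nat.sqrt n + 1) * (A ∩ Set.Iio (Nat.sqrt n + 2)).ncard := by
        rw [hK]

lemma sqrt_tendsto : Tendsto (fun n : ℕ => Nat.sqrt n + 2) atTop atTop := by
  rw [tendsto_atTop_atTop]
  intro b
  exact ⟨b*b, fun n hn => le_trans (Nat.le_sqrt.mpr hn) (by omega)⟩

lemma tendsto_of_bound (A : Set ℕ)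
    (hA : Tendsto (fun n : ℕ => ((A ∩ Set.Iio n).ncard : ℝ) / n) atTop (𝓝 0))
    (f : ℕ → ℕ)
    (hf : ∀ n, f n ≤ 2 * (Nat.sqrt n + 1) * (A ∩ Set.Iio (Nat.sqrt n + 2)).ncard) :
    Tendsto (fun n : ℕ => (f n : ℝ) / n) atTop (𝓝 0) := by
  have hg : Tendsto (fun n : ℕ =>
      18 * (((A ∩ Set.Iio (Nat.sqrt n + 2)).ncard : ℝ) / (Nat.sqrt n + 2)))
      atTop (𝓝 0) := by
    have := (hA.comp sqrt_tendsto).const_mul (18:ℝ)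
    simpa using this
  refine squeeze_zero' ?_ ?_ hg
  · filter_upwards [eventually_ge_atTop 1] with n hn
    positivity
  · filter_upwards [eventually_ge_atTop 1] with n hn
    have hs : (1:ℕ) ≤ Nat.sqrt n := Nat.le_sqrt.mpr (by omega)
    have hsn : (Nat.sqrt n) * (Nat.sqrt n) ≤ n := Nat.sqrt_le n
    set s := Nat.sqrt n with hsdef
    set c := ((A ∩ Set.Iio (s + 2)).ncard : ℝ) with hc
    have hc0 : 0 ≤ c := by positivity
    have hn0 : (0:ℝ) < n := by exact_mod_cast hn
    have hs2 : (0:ℝ) < (s:ℝ) + 2 := by positivity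
    have h1 : (f n : ℝ) ≤ 2 * ((s:ℝ) + 1) * c := by
      have := hf n
      rw [hc]
      exact_mod_cast this
    have h2 : 2 * ((s:ℝ) + 1) * ((s:ℝ) + 2) ≤ 18 * n := by
      have hsR : (1:ℝ) ≤ (s:ℝ) := by exact_mod_cast hs
      have hsnR : (s:ℝ) * (s:ℝ) ≤ (n:ℝ) := by exact_mod_cast hsn
      nlinarith
    rw [mul_div_assoc']
    calc (f n : ℝ) / n ≤ (2 * ((s:ℝ)+1) * c) / n :=
          div_le_div_of_nonneg_right h1 hn0.le |>.trans_eq rfl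
      _ ≤ (18 * c) / ((s:ℝ)+2) := by
          rw [div_le_div_iff₀ hn0 hs2]
          nlinarith

end DliAux

/-- there is a dli arithmetic sequence that is not b-bounded. -/
theorem exists_dli_not_bBounded :
    ∃ a : ℕ → ℕ, IsArithSeq a ∧ Dli a ∧ ¬ ∃ M : ℕ, ∀ n, ratios a n ≤ M := by
  refine ⟨DliAux.mya, ⟨by simp [DliAux.mya], fun n => ?_, fun n => ?_⟩, ?_, ?_⟩
  · rw [DliAux.mya_succ]
    have := DliAux.mya_pos n
    nlinarith
  · exact ⟨2*(n+1), by rw [DliAux.mya_succ]; ring⟩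
  · intro A _ hA0
    exact DliAux.tendsto_of_bound A hA0 _ (DliAux.count_bound A)
  · rintro ⟨M, hM⟩
    have h := hM (M+1)
    rw [DliAux.ratios_mya] at h
    omega
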